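/- arXiv:1505.01443 — 2 statements merged into one kernel-verified Lean document; each statement's English description precedes it below -/
import Mathlib

section
/- For any fixed natural number n ≥ 1, the integral over the box [0, log X]^{2n} of exp(min(x_1+...+x_n, y_1+...+y_n)) dx_1...dx_n dy_1...dy_n is asymptotic to C(2n, n) · X^n as X → ∞. -/
open MeasureTheory Real Filter Set Nat
open scoped ENNReal

lemma vol_simplex : ∀ (n : ℕ) {s : ℝ}, 0 < s →
    volume {x : Fin n → ℝ | (∀ i, 0 ≤ x i) ∧ ∑ i, x i < s}
      = ENNReal.ofReal (s ^ n / n !) := by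
  intro n
  induction n with
  | zero =>
    intro s hs
    have : {x : Fin 0 → ℝ | (∀ i, 0 ≤ x i) ∧ ∑ i, x i < s} = univ := by
      ext x
      simp only [mem_setOf_eq, mem_univ, iff_true]
      exact ⟨fun i => i.elim0, by simpa using hs⟩
    rw [this]
    rw [MeasureTheory.volume_pi, Measure.pi_univ]
    simp
  | succ n ih =>
    intro s hs
    set B : Set (ℝ × (Fin n → ℝ)) :=
      {p | 0 ≤ p.1 ∧ (∀ j, 0 ≤ p.2 j) ∧ p.1 + ∑ j, p.2 j < s} with hBdef
    have hB : MeasurableSet B := by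
      have h1 : MeasurableSet {p : ℝ × (Fin n → ℝ) | 0 ≤ p.1} :=
        measurableSet_le measurable_const measurable_fst
      have h2 : MeasurableSet {p : ℝ × (Fin n → ℝ) | ∀ j, 0 ≤ p.2 j} := by
        have : {p : ℝ × (Fin n → ℝ) | ∀ j, 0 ≤ p.2 j}
            = ⋂ j, {p : ℝ × (Fin n → ℝ) | 0 ≤ p.2 j} := by
          ext p; simp
        rw [this]
        exact MeasurableSet.iInter fun j =>
          measurableSet_le measurable_const (measurable_snd.eval)
      have h3 : MeasurableSet {p : ℝ × (Fin n → ℝ) | p.1 + ∑ j, p.2 j < s} := by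
        refine measurableSet_lt (measurable_fst.add ?_) measurable_const
        exact Finset.measurable_sum Finset.univ (fun j _ => measurable_snd.eval)
      have : B = {p : ℝ × (Fin n → ℝ) | 0 ≤ p.1} ∩
          ({p | ∀ j, 0 ≤ p.2 j} ∩ {p | p.1 + ∑ j, p.2 j < s}) := by
        ext p; simp [hBdef, and_assoc]
      rw [this]; exact h1.inter (h2.inter h3)
    have hmp := measurePreserving_piFinSuccAbove (fun _ : Fin (n+1) => (volume : Measure ℝ)) 0
    have hpre : (MeasurableEquiv.piFinSuccAbove (fun _ : Fin (n+1) => ℝ) 0) ⁻¹' B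
        = {x : Fin (n+1) → ℝ | (∀ i, 0 ≤ x i) ∧ ∑ i, x i < s} := by
      ext x
      simp only [Set.mem_preimage, MeasurableEquiv.piFinSuccAbove_apply, hBdef,
        Set.mem_setOf_eq, Fin.sum_univ_succ, Fin.forall_fin_succ, Fin.succAbove_zero,
        and_assoc]
      rfl
    have hmeas := hmp.measure_preimage hB.nullMeasurableSet
    rw [← hpre, MeasureTheory.volume_pi, hmeas, ← MeasureTheory.volume_pi, Measure.prod_apply hB]
    have hslice : (fun t : ℝ => volume (Prod.mk t ⁻¹' B))
        = Set.indicator (Set.Ico 0 s) (fun t => ENNReal.ofReal ((s - t) ^ n / n !)) := by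
      funext t
      by_cases ht : t ∈ Set.Ico (0:ℝ) s
      · rw [Set.indicator_of_mem ht]
        have : Prod.mk t ⁻¹' B = {y : Fin n → ℝ | (∀ j, 0 ≤ y j) ∧ ∑ j, y j < s - t} := by
          ext y
          simp only [Set.mem_preimage, hBdef, Set.mem_setOf_eq]
          constructor
          · rintro ⟨-, h2, h3⟩; exact ⟨h2, by linarith⟩
          · rintro ⟨h2, h3⟩; exact ⟨ht.1, h2, by linarith⟩
        rw [this, ih (by simp only [Set.mem_Ico] at ht; linarith)]
      · rw [Set.indicator_of_notMem ht]
        have : Prod.mk t ⁻¹' B = ∅ := by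
          ext y
          simp only [Set.mem_preimage, hBdef, Set.mem_setOf_eq, Set.mem_empty_iff_false,
            iff_false, not_and]
          intro h1 h2
          simp only [Set.mem_Ico, not_and, not_lt] at ht
          have hsum : 0 ≤ ∑ j, y j := Finset.sum_nonneg fun j _ => h2 j
          have := ht h1
          linarith
        rw [this, measure_empty]
    rw [show (∫⁻ t, volume (Prod.mk t ⁻¹' B)) =
        ∫⁻ t in Set.Ico 0 s, ENNReal.ofReal ((s - t) ^ n / n !) from by
      rw [← lintegral_indicator measurableSet_Ico
        (fun t => ENNReal.ofReal ((s - t) ^ n / n !))]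
      exact lintegral_congr fun t => congrFun hslice t]
    have hint : IntegrableOn (fun t => (s - t) ^ n / n !) (Set.Ico 0 s) := by
      apply Integrable.mono_measure ?_ (Measure.restrict_mono Set.Ico_subset_Icc_self le_rfl)
      exact (Continuous.integrableOn_Icc (by continuity))
    rw [← ofReal_integral_eq_lintegral_ofReal hint
      ((ae_restrict_iff' measurableSet_Ico).2 (Filter.Eventually.of_forall fun t ht => by
        have h0 : (0:ℝ) ≤ s - t := by linarith [ht.2]
        positivity))]
    congr 1
    have h1 : ∫ t in Set.Ico 0 s, (s - t) ^ n / n ! = ∫ t in (0:ℝ)..s, (s - t) ^ n / n ! := by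
      rw [MeasureTheory.integral_Ico_eq_integral_Ioo,
        intervalIntegral.integral_of_le hs.le, MeasureTheory.integral_Ioc_eq_integral_Ioo]
    rw [h1]
    have h2 : ∫ t in (0:ℝ)..s, (s - t) ^ n / n !
        = (∫ t in (0:ℝ)..s, (s - t) ^ n) / n ! := by
      rw [intervalIntegral.integral_div]
    rw [h2, intervalIntegral.integral_comp_sub_left (fun x => x ^ n) s]
    simp only [sub_zero, sub_self]
    rw [integral_pow]
    rw [Nat.factorial_succ]
    field_simp
    rw [zero_pow (Nat.succ_ne_zero n)]; push_cast; ring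

lemma exp_int : IntegrableOn (fun x => Real.exp (-x)) (Set.Ioi (0:ℝ)) := by
  have h := Real.GammaIntegral_convergent (by norm_num : (0:ℝ) < 1)
  simpa using h

lemma gamma_int (m : ℕ) :
    ∫ x in Set.Ioi (0:ℝ), Real.exp (-x) * x ^ m = m ! := by
  have h := Real.Gamma_eq_integral (by positivity : (0:ℝ) < m + 1)
  rw [Real.Gamma_nat_eq_factorial m] at h
  rw [h]
  apply setIntegral_congr_fun measurableSet_Ioi
  intro x hx
  have h2 : ((m:ℝ) + 1 - 1) = ((m : ℕ) : ℝ) := by ring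
  simp only [h2, Real.rpow_natCast]

lemma gamma_int_on (m : ℕ) :
    IntegrableOn (fun x => Real.exp (-x) * x ^ m) (Set.Ioi (0:ℝ)) := by
  have h := Real.GammaIntegral_convergent (by positivity : (0:ℝ) < m + 1)
  have heq : ∀ x : ℝ, Real.exp (-x) * x ^ ((m:ℝ) + 1 - 1) = Real.exp (-x) * x ^ m := by
    intro x
    have : ((m:ℝ) + 1 - 1) = ((m : ℕ) : ℝ) := by ring
    rw [this, Real.rpow_natCast]
  exact (integrableOn_congr_fun (fun x _ => heq x) measurableSet_Ioi).mp h

lemma key_lintegral (n : ℕ) :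
    ∫⁻ p in ((Set.univ.pi fun _ : Fin n => Set.Ici (0:ℝ)) ×ˢ
        (Set.univ.pi fun _ : Fin n => Set.Ici (0:ℝ))),
      ENNReal.ofReal (Real.exp (-max (∑ i, p.1 i) (∑ i, p.2 i)))
      = ENNReal.ofReal ((2 * n).choose n) := by
  classical
  set M : (Fin n → ℝ) × (Fin n → ℝ) → ℝ := fun p => max (∑ i, p.1 i) (∑ i, p.2 i) with hM
  set Q : Set ((Fin n → ℝ) × (Fin n → ℝ)) := (Set.univ.pi fun _ : Fin n => Set.Ici (0:ℝ)) ×ˢ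
      (Set.univ.pi fun _ : Fin n => Set.Ici (0:ℝ)) with hQ
  have hMcont : Continuous M := by
    apply Continuous.max
    · exact continuous_finset_sum _ fun i _ => (continuous_apply i).comp continuous_fst
    · exact continuous_finset_sum _ fun i _ => (continuous_apply i).comp continuous_snd
  have hMmeas : Measurable M := hMcont.measurable
  have hQmeas : MeasurableSet Q := by
    exact (MeasurableSet.univ_pi fun _ => measurableSet_Ici).prod
      (MeasurableSet.univ_pi fun _ => measurableSet_Ici)
  -- the double-integral representation
  set f : (Fin n → ℝ) × (Fin n → ℝ) → ℝ → ℝ≥0∞ := fun p s =>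
    Set.indicator (Set.Ioi (M p)) (fun s => ENNReal.ofReal (Real.exp (-s))) s with hf
  have hMnonneg : ∀ p ∈ Q, 0 ≤ M p := by
    intro p hp
    rw [hQ, Set.mem_prod] at hp
    refine le_trans (Finset.sum_nonneg fun i _ => ?_) (le_max_left _ _)
    exact hp.1 i (Set.mem_univ i)
  have step1 : ∀ p ∈ Q, ENNReal.ofReal (Real.exp (-(M p)))
      = ∫⁻ s in Set.Ioi (0:ℝ), f p s := by
    intro p hp
    have h0 : 0 ≤ M p := hMnonneg p hp
    rw [hf]
    simp only
    rw [← lintegral_indicator measurableSet_Ioi, Set.indicator_indicator,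
      Set.Ioi_inter_Ioi, max_eq_right h0, lintegral_indicator measurableSet_Ioi]
    rw [← ofReal_integral_eq_lintegral_ofReal
      (exp_int.mono_set (Set.Ioi_subset_Ioi h0))
      (Filter.Eventually.of_forall fun s => (Real.exp_pos _).le)]
    rw [integral_exp_neg_Ioi]
  have hSmeas : MeasurableSet {q : ((Fin n → ℝ) × (Fin n → ℝ)) × ℝ | M q.1 < q.2} :=
    measurableSet_lt (hMmeas.comp measurable_fst) measurable_snd
  have huncurry : Function.uncurry f
      = Set.indicator {q : ((Fin n → ℝ) × (Fin n → ℝ)) × ℝ | M q.1 < q.2}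
        (fun q => ENNReal.ofReal (Real.exp (-q.2))) := by
    funext q
    simp [hf, Function.uncurry, Set.indicator_apply, Set.mem_Ioi, Set.mem_setOf_eq]
  have hfmeas : Measurable (Function.uncurry f) := by
    rw [huncurry]
    exact (ENNReal.measurable_ofReal.comp
      ((Real.continuous_exp.measurable).comp measurable_snd.neg)).indicator hSmeas
  have hswap : ∫⁻ p in Q, ∫⁻ s in Set.Ioi (0:ℝ), f p s
      = ∫⁻ s in Set.Ioi (0:ℝ), ∫⁻ p in Q, f p s := by
    exact lintegral_lintegral_swap hfmeas.aemeasurable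
  have inner : ∀ s : ℝ, 0 < s → (∫⁻ p in Q, f p s)
      = ENNReal.ofReal (Real.exp (-s)) * ENNReal.ofReal (s ^ n / n !) ^ 2 := by
    intro s hs
    have hlt : MeasurableSet {p : (Fin n → ℝ) × (Fin n → ℝ) | M p < s} :=
      measurableSet_lt hMmeas measurable_const
    have h1 : ∀ p, f p s
        = Set.indicator {p : (Fin n → ℝ) × (Fin n → ℝ) | M p < s}
          (fun _ => ENNReal.ofReal (Real.exp (-s))) p := by
      intro p
      simp [hf, Set.indicator_apply, Set.mem_Ioi, Set.mem_setOf_eq]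
    rw [lintegral_congr h1, lintegral_indicator_const hlt,
      Measure.restrict_apply hlt]
    have hset : {p : (Fin n → ℝ) × (Fin n → ℝ) | M p < s} ∩ Q
        = {x : Fin n → ℝ | (∀ i, 0 ≤ x i) ∧ ∑ i, x i < s} ×ˢ
          {x : Fin n → ℝ | (∀ i, 0 ≤ x i) ∧ ∑ i, x i < s} := by
      ext p
      simp only [Set.mem_inter_iff, Set.mem_setOf_eq, hQ, Set.mem_prod,
        Set.mem_pi, Set.mem_univ, true_implies, Set.mem_Ici, hM, max_lt_iff]
      tauto
    rw [hset, Measure.volume_eq_prod, Measure.prod_prod, vol_simplex n hs, sq]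
  have final : ∫⁻ s in Set.Ioi (0:ℝ),
      (ENNReal.ofReal (Real.exp (-s)) * ENNReal.ofReal (s ^ n / n !) ^ 2)
      = ENNReal.ofReal ((2 * n).choose n) := by
    have heq : ∀ s : ℝ, Real.exp (-s) * (s ^ n / n !) ^ 2
        = (((n ! : ℝ)) ^ 2)⁻¹ * (Real.exp (-s) * s ^ (2 * n)) := by
      intro s
      rw [div_pow, ← pow_mul, mul_comm n 2]
      ring
    have hintOn : IntegrableOn (fun s => Real.exp (-s) * (s ^ n / n !) ^ 2)
        (Set.Ioi (0:ℝ)) := by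
      have := (gamma_int_on (2 * n)).const_mul (((n ! : ℝ)) ^ 2)⁻¹
      exact (integrableOn_congr_fun (fun s _ => heq s) measurableSet_Ioi).mpr this
    have h2 : ∫⁻ s in Set.Ioi (0:ℝ),
        (ENNReal.ofReal (Real.exp (-s)) * ENNReal.ofReal (s ^ n / n !) ^ 2)
        = ∫⁻ s in Set.Ioi (0:ℝ),
          ENNReal.ofReal (Real.exp (-s) * (s ^ n / n !) ^ 2) := by
      apply setLIntegral_congr_fun measurableSet_Ioi
      intro s hs
      have hs' : (0:ℝ) < s := hs
      beta_reduce
      rw [ENNReal.ofReal_mul (Real.exp_pos _).le, ENNReal.ofReal_pow (by positivity)]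
    rw [h2, ← ofReal_integral_eq_lintegral_ofReal hintOn
      (Filter.Eventually.of_forall fun s => mul_nonneg (Real.exp_pos _).le (sq_nonneg _))]
    congr 1
    rw [MeasureTheory.setIntegral_congr_fun measurableSet_Ioi (fun s _ => heq s),
      MeasureTheory.integral_const_mul, gamma_int (2 * n)]
    have hchoose : ((2 * n).choose n) * n ! * n ! = (2 * n)! := by
      have := Nat.choose_mul_factorial_mul_factorial (Nat.le_mul_of_pos_left n two_pos)
      simpa [two_mul, Nat.add_sub_cancel] using this
    have hcast : ((2 * n)! : ℝ) = ((2 * n).choose n : ℝ) * (n ! : ℝ) * (n ! : ℝ) := by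
      rw [← hchoose]; push_cast; ring
    rw [hcast]
    have hnfac : (0:ℝ) < n ! := by positivity
    field_simp
  calc ∫⁻ p in Q, ENNReal.ofReal (Real.exp (-(M p)))
      = ∫⁻ p in Q, ∫⁻ s in Set.Ioi (0:ℝ), f p s := by
        apply setLIntegral_congr_fun hQmeas
        exact step1
    _ = ∫⁻ s in Set.Ioi (0:ℝ), ∫⁻ p in Q, f p s := hswap
    _ = ∫⁻ s in Set.Ioi (0:ℝ),
          (ENNReal.ofReal (Real.exp (-s)) * ENNReal.ofReal (s ^ n / n !) ^ 2) := by
        apply setLIntegral_congr_fun measurableSet_Ioi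
        exact fun s hs => inner s hs
    _ = ENNReal.ofReal ((2 * n).choose n) := final

lemma key_integrable (n : ℕ) :
    IntegrableOn (fun p : (Fin n → ℝ) × (Fin n → ℝ) =>
      Real.exp (-max (∑ i, p.1 i) (∑ i, p.2 i)))
      ((Set.univ.pi fun _ : Fin n => Set.Ici (0:ℝ)) ×ˢ
        (Set.univ.pi fun _ : Fin n => Set.Ici (0:ℝ))) := by
  have hcont : Continuous (fun p : (Fin n → ℝ) × (Fin n → ℝ) =>
      Real.exp (-max (∑ i, p.1 i) (∑ i, p.2 i))) := by
    apply Real.continuous_exp.comp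
    apply Continuous.neg
    apply Continuous.max
    · exact continuous_finset_sum _ fun i _ => (continuous_apply i).comp continuous_fst
    · exact continuous_finset_sum _ fun i _ => (continuous_apply i).comp continuous_snd
  constructor
  · exact hcont.aestronglyMeasurable
  · rw [hasFiniteIntegral_iff_ofReal (Filter.Eventually.of_forall fun p => (Real.exp_pos _).le)]
    rw [key_lintegral n]
    exact ENNReal.ofReal_lt_top

lemma key_integral (n : ℕ) :
    ∫ p in ((Set.univ.pi fun _ : Fin n => Set.Ici (0:ℝ)) ×ˢ
        (Set.univ.pi fun _ : Fin n => Set.Ici (0:ℝ))),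
      Real.exp (-max (∑ i, p.1 i) (∑ i, p.2 i)) = ((2 * n).choose n : ℝ) := by
  rw [MeasureTheory.integral_eq_lintegral_of_nonneg_ae
    (Filter.Eventually.of_forall fun p => (Real.exp_pos _).le)
    (key_integrable n).aestronglyMeasurable]
  rw [key_lintegral n]
  exact ENNReal.toReal_ofReal (by positivity)

lemma refl_eq (n : ℕ) (T : ℝ) :
    ∫ p in ((Set.univ.pi fun _ : Fin n => Set.Icc (0:ℝ) T) ×ˢ
        (Set.univ.pi fun _ : Fin n => Set.Icc (0:ℝ) T)),
      Real.exp (min (∑ i, p.1 i) (∑ i, p.2 i))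
    = Real.exp (n * T) * ∫ p in ((Set.univ.pi fun _ : Fin n => Set.Icc (0:ℝ) T) ×ˢ
        (Set.univ.pi fun _ : Fin n => Set.Icc (0:ℝ) T)),
      Real.exp (-max (∑ i, p.1 i) (∑ i, p.2 i)) := by
  set c : Fin n → ℝ := fun _ => T with hc
  set e : (Fin n → ℝ) ≃ᵐ (Fin n → ℝ) := MeasurableEquiv.subLeft c with he
  set Φ : ((Fin n → ℝ) × (Fin n → ℝ)) ≃ᵐ ((Fin n → ℝ) × (Fin n → ℝ)) :=
    e.prodCongr e with hΦ
  have hmp1 : MeasurePreserving (⇑e) volume volume :=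
    Measure.measurePreserving_sub_left volume c
  have hΦapp : ∀ p : (Fin n → ℝ) × (Fin n → ℝ), Φ p = (c - p.1, c - p.2) := fun p => rfl
  have hmp : MeasurePreserving (⇑Φ) volume volume := by
    rw [Measure.volume_eq_prod]
    exact hmp1.prod hmp1
  have hmem : ∀ x : Fin n → ℝ,
      ((c - x) ∈ (Set.univ.pi fun _ : Fin n => Set.Icc (0:ℝ) T)
        ↔ x ∈ (Set.univ.pi fun _ : Fin n => Set.Icc (0:ℝ) T)) := by
    intro x
    simp only [Set.mem_pi, Set.mem_univ, true_implies, Set.mem_Icc, Pi.sub_apply, hc]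
    constructor
    · intro h i
      obtain ⟨a, b⟩ := h i
      constructor <;> linarith
    · intro h i
      obtain ⟨a, b⟩ := h i
      constructor <;> linarith
  have hpre : Φ ⁻¹' ((Set.univ.pi fun _ : Fin n => Set.Icc (0:ℝ) T) ×ˢ
      (Set.univ.pi fun _ : Fin n => Set.Icc (0:ℝ) T))
      = ((Set.univ.pi fun _ : Fin n => Set.Icc (0:ℝ) T) ×ˢ
        (Set.univ.pi fun _ : Fin n => Set.Icc (0:ℝ) T)) := by
    ext p
    rw [Set.mem_preimage, hΦapp p, Set.mem_prod, Set.mem_prod]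
    rw [show ((c - p.1, c - p.2) : (Fin n → ℝ) × (Fin n → ℝ)).1 = c - p.1 from rfl,
      show ((c - p.1, c - p.2) : (Fin n → ℝ) × (Fin n → ℝ)).2 = c - p.2 from rfl,
      hmem p.1, hmem p.2]
  have key := hmp.setIntegral_preimage_emb Φ.measurableEmbedding
    (fun p => Real.exp (min (∑ i, p.1 i) (∑ i, p.2 i)))
    ((Set.univ.pi fun _ : Fin n => Set.Icc (0:ℝ) T) ×ˢ
      (Set.univ.pi fun _ : Fin n => Set.Icc (0:ℝ) T))
  rw [hpre] at key
  rw [← key]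
  rw [← MeasureTheory.integral_const_mul]
  apply MeasureTheory.setIntegral_congr_fun
    ((MeasurableSet.univ_pi fun _ => measurableSet_Icc).prod
      (MeasurableSet.univ_pi fun _ => measurableSet_Icc))
  intro p hp
  have h1 : ∀ x : Fin n → ℝ, (∑ i, (c - x) i) = n * T - ∑ i, x i := by
    intro x
    simp only [Pi.sub_apply, hc, Finset.sum_sub_distrib, Finset.sum_const,
      Finset.card_univ, Fintype.card_fin, nsmul_eq_mul]
  have hmin : min (∑ i, (Φ p).1 i) (∑ i, (Φ p).2 i)
      = n * T - max (∑ i, p.1 i) (∑ i, p.2 i) := by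
    rw [hΦapp p]
    rw [show ((c - p.1, c - p.2) : (Fin n → ℝ) × (Fin n → ℝ)).1 = c - p.1 from rfl,
      show ((c - p.1, c - p.2) : (Fin n → ℝ) × (Fin n → ℝ)).2 = c - p.2 from rfl,
      h1, h1]
    rcases le_total (∑ i, p.1 i) (∑ i, p.2 i) with h | h
    · rw [max_eq_right h, min_eq_right (by linarith)]
    · rw [max_eq_left h, min_eq_left (by linarith)]
  show Real.exp (min (∑ i, (Φ p).1 i) (∑ i, (Φ p).2 i))
      = Real.exp (n * T) * Real.exp (-max (∑ i, p.1 i) (∑ i, p.2 i))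
  rw [hmin, sub_eq_add_neg, Real.exp_add]

lemma limit_lemma (n : ℕ) :
    Tendsto (fun T : ℝ => ∫ p in ((Set.univ.pi fun _ : Fin n => Set.Icc (0:ℝ) T) ×ˢ
        (Set.univ.pi fun _ : Fin n => Set.Icc (0:ℝ) T)),
      Real.exp (-max (∑ i, p.1 i) (∑ i, p.2 i)))
      atTop (nhds (((2 * n).choose n : ℝ))) := by
  set s : ℝ → Set ((Fin n → ℝ) × (Fin n → ℝ)) := fun T =>
    (Set.univ.pi fun _ : Fin n => Set.Icc (0:ℝ) T) ×ˢ
      (Set.univ.pi fun _ : Fin n => Set.Icc (0:ℝ) T) with hs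
  have hsm : ∀ T, MeasurableSet (s T) := fun T =>
    (MeasurableSet.univ_pi fun _ => measurableSet_Icc).prod
      (MeasurableSet.univ_pi fun _ => measurableSet_Icc)
  have hmono : Monotone s := by
    intro a b hab
    exact Set.prod_mono (Set.pi_mono fun i _ => Set.Icc_subset_Icc_right hab)
      (Set.pi_mono fun i _ => Set.Icc_subset_Icc_right hab)
  have hunion : (⋃ T : ℝ, s T) = (Set.univ.pi fun _ : Fin n => Set.Ici (0:ℝ)) ×ˢ
      (Set.univ.pi fun _ : Fin n => Set.Ici (0:ℝ)) := by
    ext p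
    simp only [Set.mem_iUnion, hs, Set.mem_prod, Set.mem_pi, Set.mem_univ, true_implies,
      Set.mem_Icc, Set.mem_Ici]
    constructor
    · rintro ⟨T, h1, h2⟩
      exact ⟨fun i => (h1 i).1, fun i => (h2 i).1⟩
    · rintro ⟨h1, h2⟩
      refine ⟨‖p.1‖ + ‖p.2‖, fun i => ⟨h1 i, ?_⟩, fun i => ⟨h2 i, ?_⟩⟩
      · have ha := norm_le_pi_norm p.1 i
        have hb : (0:ℝ) ≤ ‖p.2‖ := norm_nonneg _
        have : |p.1 i| ≤ ‖p.1‖ := by simpa using ha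
        have := le_abs_self (p.1 i)
        linarith
      · have ha := norm_le_pi_norm p.2 i
        have hb : (0:ℝ) ≤ ‖p.1‖ := norm_nonneg _
        have : |p.2 i| ≤ ‖p.2‖ := by simpa using ha
        have := le_abs_self (p.2 i)
        linarith
  have hint : IntegrableOn (fun p : (Fin n → ℝ) × (Fin n → ℝ) =>
      Real.exp (-max (∑ i, p.1 i) (∑ i, p.2 i))) (⋃ T : ℝ, s T) := by
    rw [hunion]; exact key_integrable n
  have h := MeasureTheory.tendsto_setIntegral_of_monotone hsm hmono hint
  rw [hunion, key_integral n] at h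
  exact h

/-- For fixed `n ≥ 1`, the integral over `[0, log X]^{2n}` of
`exp(min(x₁+⋯+xₙ, y₁+⋯+yₙ))` is asymptotic to `C(2n,n) · Xⁿ` as `X → ∞`. -/
theorem stmt0 (n : ℕ) (hn : 1 ≤ n) :
    Tendsto (fun X : ℝ =>
      (∫ p in (Set.univ.pi fun _ : Fin n => Set.Icc (0:ℝ) (Real.log X)) ×ˢ
          (Set.univ.pi fun _ : Fin n => Set.Icc (0:ℝ) (Real.log X)),
        Real.exp (min (∑ i, p.1 i) (∑ i, p.2 i))) / X ^ n)
      atTop (nhds (((2 * n).choose n : ℝ))) := by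
  have hlim := (limit_lemma n).comp Real.tendsto_log_atTop
  apply hlim.congr'
  filter_upwards [eventually_gt_atTop (0:ℝ)] with X hX
  have hXpow : X ^ n = Real.exp (n * Real.log X) := by
    rw [Real.exp_nat_mul, Real.exp_log hX]
  rw [Function.comp_apply]
  rw [refl_eq n (Real.log X), hXpow]
  rw [mul_comm, mul_div_assoc, div_self (Real.exp_ne_zero _), mul_one]
end

section
/- For any n ≥ 1, the integral over [0,∞)^{2n} of exp(-max(v_1+...+v_n, w_1+...+w_n)) dv_1...dw_n equals the binomial coefficient C(2n, n). -/
open MeasureTheory Real Set Nat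

lemma simplex_vol : ∀ (n : ℕ) (t : ℝ), 0 < t →
    volume {x : Fin n → ℝ | (∀ i, 0 ≤ x i) ∧ ∑ i, x i < t} = ENNReal.ofReal (t ^ n / n !) := by
  intro n
  induction n with
  | zero =>
    intro t ht
    have h : {x : Fin 0 → ℝ | (∀ i, 0 ≤ x i) ∧ ∑ i, x i < t} = Set.univ := by
      ext x
      simp [Finset.sum_empty, ht, Fin.forall_fin_zero_pi]
    rw [h, MeasureTheory.volume_pi, Measure.pi_univ]
    simp
  | succ n ih =>
    intro t ht
    set e := MeasurableEquiv.piFinSuccAbove (fun _ : Fin (n+1) => ℝ) 0 with he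
    set T : Set (ℝ × (Fin n → ℝ)) :=
      {q | 0 ≤ q.1 ∧ (∀ i, 0 ≤ q.2 i) ∧ q.1 + ∑ i, q.2 i < t} with hTdef
    have hT : MeasurableSet T := by
      have h1 : MeasurableSet {q : ℝ × (Fin n → ℝ) | 0 ≤ q.1} :=
        measurableSet_le measurable_const measurable_fst
      have h2 : MeasurableSet {q : ℝ × (Fin n → ℝ) | ∀ i, 0 ≤ q.2 i} := by
        rw [Set.setOf_forall]
        exact MeasurableSet.iInter fun i =>
          measurableSet_le measurable_const (measurable_snd.eval)
      have h3 : MeasurableSet {q : ℝ × (Fin n → ℝ) | q.1 + ∑ i, q.2 i < t} :=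
        measurableSet_lt (measurable_fst.add (Finset.measurable_sum Finset.univ
            (fun i _ => measurable_snd.eval))) measurable_const
      exact h1.inter (h2.inter h3)
    have hpre : {x : Fin (n+1) → ℝ | (∀ i, 0 ≤ x i) ∧ ∑ i, x i < t} = e ⁻¹' T := by
      ext x
      simp only [Set.mem_preimage, Set.mem_setOf_eq, hTdef, he,
        MeasurableEquiv.piFinSuccAbove_apply, Fin.insertNthEquiv, Fin.removeNth,
        Fin.succAbove_zero, Fin.sum_univ_succ, Fin.forall_fin_succ]
      tauto
    rw [hpre, (volume_preserving_piFinSuccAbove (fun _ : Fin (n+1) => ℝ) 0).measure_preimage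
      hT.nullMeasurableSet]
    rw [Measure.volume_eq_prod, Measure.prod_apply hT]
    have hslice : ∀ a : ℝ, volume (Prod.mk a ⁻¹' T)
        = (Ico (0:ℝ) t).indicator (fun a => ENNReal.ofReal ((t - a) ^ n / n !)) a := by
      intro a
      by_cases ha : a ∈ Ico (0:ℝ) t
      · obtain ⟨ha0, hat⟩ := ha
        have : Prod.mk a ⁻¹' T = {y : Fin n → ℝ | (∀ i, 0 ≤ y i) ∧ ∑ i, y i < t - a} := by
          ext y
          simp only [Set.mem_preimage, hTdef, Set.mem_setOf_eq]
          constructor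
          · rintro ⟨-, h2, h3⟩; exact ⟨h2, by linarith⟩
          · rintro ⟨h2, h3⟩; exact ⟨ha0, h2, by linarith⟩
        rw [this, ih (t - a) (by linarith), Set.indicator_of_mem (Set.mem_Ico.mpr ⟨ha0, hat⟩)]
      · have : Prod.mk a ⁻¹' T = ∅ := by
          ext y
          simp only [Set.mem_preimage, hTdef, Set.mem_setOf_eq, Set.mem_empty_iff_false,
            iff_false]
          rintro ⟨h1, h2, h3⟩
          have hy : 0 ≤ ∑ i, y i := Finset.sum_nonneg fun i _ => h2 i
          rw [Set.mem_Ico, not_and_or, not_le, not_lt] at ha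
          rcases ha with ha | ha
          · linarith
          · linarith
        rw [this, Set.indicator_of_notMem ha]
        simp
    rw [lintegral_congr hslice, lintegral_indicator measurableSet_Ico]
    have hcont : Continuous fun a : ℝ => (t - a) ^ n / (n ! : ℝ) :=
      ((continuous_const.sub continuous_id).pow n).div_const _
    have hint : IntegrableOn (fun a : ℝ => (t - a) ^ n / (n ! : ℝ)) (Ico 0 t) :=
      hcont.integrableOn_Icc.mono_set Set.Ico_subset_Icc_self
    rw [← ofReal_integral_eq_lintegral_ofReal hint (ae_restrict_of_forall_mem measurableSet_Ico ?nn)]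
    case nn =>
      intro a ha
      have h0 : (0:ℝ) ≤ t - a := by linarith [ha.2]
      positivity
    congr 1
    rw [setIntegral_congr_set Ico_ae_eq_Ioc,
      ← intervalIntegral.integral_of_le (le_of_lt ht)]
    rw [intervalIntegral.integral_div]
    have := intervalIntegral.integral_comp_sub_left (a := (0:ℝ)) (b := t)
      (fun x : ℝ => x ^ n) t
    rw [this]
    simp only [sub_zero, sub_self]
    rw [integral_pow]
    rw [Nat.factorial_succ]
    push_cast
    have h1 : (0:ℝ) < (n:ℝ) + 1 := by positivity
    have h2 : (0:ℝ) < (n ! : ℝ) := by positivity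
    field_simp
    simp

lemma simplex_vol_nonpos (n : ℕ) (t : ℝ) (ht : t ≤ 0) :
    volume {x : Fin n → ℝ | (∀ i, 0 ≤ x i) ∧ ∑ i, x i < t} = 0 := by
  convert measure_empty (μ := (volume : Measure (Fin n → ℝ)))
  ext x
  simp only [Set.mem_setOf_eq, Set.mem_empty_iff_false, iff_false, not_and]
  intro h hlt
  have : 0 ≤ ∑ i, x i := Finset.sum_nonneg fun i _ => h i
  linarith

/-- For `n ≥ 1`, the integral over `[0,∞)^{2n}` of
`exp(-max(v₁+⋯+vₙ, w₁+⋯+wₙ))` equals the binomial coefficient `C(2n, n)`. -/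
theorem stmt1 (n : ℕ) (hn : 1 ≤ n) :
    (∫ p in (Set.univ.pi fun _ : Fin n => Set.Ici (0:ℝ)) ×ˢ
        (Set.univ.pi fun _ : Fin n => Set.Ici (0:ℝ)),
      Real.exp (-(max (∑ i, p.1 i) (∑ i, p.2 i)))) = ((2 * n).choose n : ℝ) := by
  set S : Set (Fin n → ℝ) := Set.univ.pi fun _ : Fin n => Set.Ici (0:ℝ) with hSdef
  have hS : MeasurableSet S := MeasurableSet.univ_pi fun _ => measurableSet_Ici
  set c : (Fin n → ℝ) × (Fin n → ℝ) → ℝ := fun p => max (∑ i, p.1 i) (∑ i, p.2 i) with hcdef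
  have hc : Measurable c := by
    apply Measurable.max
    · exact Finset.measurable_sum Finset.univ fun i _ => (measurable_fst.eval)
    · exact Finset.measurable_sum Finset.univ fun i _ => (measurable_snd.eval)
  have hf_meas : Measurable fun p => Real.exp (-(c p)) :=
    (Real.measurable_exp.comp hc.neg)
  -- pass to lintegral
  rw [integral_eq_lintegral_of_nonneg_ae
      (Filter.Eventually.of_forall fun p => (Real.exp_pos _).le)
      hf_meas.aestronglyMeasurable]
  -- layer cake
  set F : ((Fin n → ℝ) × (Fin n → ℝ)) → ℝ → ENNReal := fun p u =>
    if c p < u then ENNReal.ofReal (Real.exp (-u)) else 0 with hFdef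
  have hlayer : ∀ p : (Fin n → ℝ) × (Fin n → ℝ),
      ENNReal.ofReal (Real.exp (-(c p))) = ∫⁻ u, F p u := by
    intro p
    have h1 : (fun u => F p u) = (Set.Ioi (c p)).indicator
        (fun u => ENNReal.ofReal (Real.exp (-u))) := by
      ext u
      simp [hFdef, Set.indicator_apply, Set.mem_Ioi]
    rw [h1, lintegral_indicator measurableSet_Ioi]
    have hint : IntegrableOn (fun u : ℝ => Real.exp (-u)) (Set.Ioi (c p)) := by
      simpa using exp_neg_integrableOn_Ioi (c p) (by norm_num : (0:ℝ) < 1)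
    rw [← ofReal_integral_eq_lintegral_ofReal hint
      (Filter.Eventually.of_forall fun u => (Real.exp_pos _).le)]
    rw [integral_exp_neg_Ioi]
  calc (∫⁻ p in S ×ˢ S, ENNReal.ofReal (Real.exp (-(c p)))).toReal
      = (∫⁻ p in S ×ˢ S, ∫⁻ u, F p u).toReal := by
        congr 1
        exact lintegral_congr hlayer
    _ = (∫⁻ u, ∫⁻ p in S ×ˢ S, F p u).toReal := by
        congr 1
        apply lintegral_lintegral_swap
        apply Measurable.aemeasurable
        have : (Function.uncurry F) = fun q : ((Fin n → ℝ) × (Fin n → ℝ)) × ℝ =>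
            if c q.1 < q.2 then ENNReal.ofReal (Real.exp (-q.2)) else 0 := by
          ext q; rfl
        rw [this]
        exact Measurable.ite (measurableSet_lt (hc.comp measurable_fst) measurable_snd)
          ((Real.measurable_exp.comp measurable_snd.neg).ennreal_ofReal) measurable_const
    _ = ((2 * n).choose n : ℝ) := by
        have hinner : ∀ u : ℝ, (∫⁻ p in S ×ˢ S, F p u) =
            (Set.Ioi (0:ℝ)).indicator (fun u => ENNReal.ofReal
              (Real.exp (-u) * (u ^ n / n !) * (u ^ n / n !))) u := by
          intro u
          set B : Set ((Fin n → ℝ) × (Fin n → ℝ)) := {p | c p < u} with hBdef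
          have hB : MeasurableSet B := measurableSet_lt hc measurable_const
          have h1 : (fun p => F p u) = B.indicator (fun _ => ENNReal.ofReal (Real.exp (-u))) := by
            ext p
            simp [hFdef, hBdef, Set.indicator_apply]
          rw [h1, lintegral_indicator hB, setLIntegral_const, Measure.restrict_apply hB]
          set A : Set (Fin n → ℝ) := {x | (∀ i, 0 ≤ x i) ∧ ∑ i, x i < u} with hAdef
          have h2 : B ∩ (S ×ˢ S) = A ×ˢ A := by
            ext p
            simp only [hBdef, hAdef, hSdef, hcdef, Set.mem_inter_iff, Set.mem_setOf_eq,
              Set.mem_prod, Set.mem_pi, Set.mem_univ, true_implies, Set.mem_Ici, max_lt_iff]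
            tauto
          rw [h2, Measure.volume_eq_prod, Measure.prod_prod]
          by_cases hu : 0 < u
          · rw [simplex_vol n u hu, Set.indicator_of_mem (Set.mem_Ioi.mpr hu)]
            rw [ENNReal.ofReal_mul (by positivity), ENNReal.ofReal_mul (Real.exp_pos _).le,
              mul_assoc]
          · rw [Set.indicator_of_notMem (by simpa using hu)]
            rw [simplex_vol_nonpos n u (not_lt.mp hu)]
            simp
        rw [lintegral_congr hinner, lintegral_indicator measurableSet_Ioi]
        have heq : (fun u : ℝ => Real.exp (-u) * (u ^ n / n !) * (u ^ n / n !))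
            = fun u : ℝ => (Real.exp (-u) * u ^ (2 * n)) * (((n ! : ℝ) * n !)⁻¹) := by
          funext u
          rw [two_mul, pow_add]
          field_simp
        have hGamma : IntegrableOn (fun u : ℝ => Real.exp (-u) * u ^ (2 * n))
            (Set.Ioi (0:ℝ)) := by
          have h := Real.GammaIntegral_convergent
            (s := ((2 * n : ℕ) : ℝ) + 1) (by positivity)
          rw [show ((2 * n : ℕ) : ℝ) + 1 - 1 = ((2 * n : ℕ) : ℝ) by ring] at h
          simp_rw [Real.rpow_natCast] at h
          exact h
        have hint2 : IntegrableOn (fun u : ℝ => Real.exp (-u) * (u ^ n / n !) * (u ^ n / n !))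
            (Set.Ioi (0:ℝ)) := by
          rw [heq]
          exact hGamma.mul_const _
        rw [← ofReal_integral_eq_lintegral_ofReal hint2
          (ae_restrict_of_forall_mem measurableSet_Ioi fun u hu => by
            have h0 : (0:ℝ) ≤ u := le_of_lt hu
            positivity)]
        rw [ENNReal.toReal_ofReal]
        swap
        · apply integral_nonneg_of_ae
          exact ae_restrict_of_forall_mem measurableSet_Ioi fun u hu => by
            have h0 : (0:ℝ) ≤ u := le_of_lt hu
            positivity
        have hG : (∫ u in Set.Ioi (0:ℝ), Real.exp (-u) * u ^ (2 * n)) = ((2 * n)! : ℝ) := by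
          have h1 := Real.Gamma_eq_integral (s := ((2 * n : ℕ) : ℝ) + 1) (by positivity)
          rw [show ((2 * n : ℕ) : ℝ) + 1 - 1 = ((2 * n : ℕ) : ℝ) by ring] at h1
          simp_rw [Real.rpow_natCast] at h1
          rw [← h1, Real.Gamma_nat_eq_factorial]
        rw [heq, integral_mul_const, hG]
        rw [Nat.cast_choose ℝ (Nat.le_mul_of_pos_left n (by norm_num : 0 < 2))]
        rw [show 2 * n - n = n by omega]
        rw [div_eq_mul_inv]
end
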